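/- Let D be a database instance in which all tuples are endogenous, Q a monotone Boolean query with ¬Q(∅), and t ∈ D an actual cause for Q. Then the minimum cardinality of a subset-minimal diagnosis for the diagnosis problem M associated with Q that contains t equals 1 + m, where m is the minimum cardinality of a contingency set for t; in particular, for any minimum-cardinality contingency set Γ for t, the set Γ ∪ {t} is a subset-minimal diagnosis containing t. -/
import Mathlib


/-- A diagnosis for the diagnosis problem `M` associated with `Q` on `D`
(all tuples endogenous). -/
def IsDiagnosis {U : Type*} [DecidableEq U] (D Dn : Finset U) (Q : Finset U → Prop)
    (Δ : Finset U) : Prop :=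
  Δ ⊆ Dn ∧ ¬ Q (D \ Δ)

/-- A subset-minimal diagnosis. -/
def IsMinDiagnosis {U : Type*} [DecidableEq U] (D Dn : Finset U) (Q : Finset U → Prop)
    (Δ : Finset U) : Prop :=
  IsDiagnosis D Dn Q Δ ∧ ∀ Δ' ⊂ Δ, ¬ IsDiagnosis D Dn Q Δ'

/-- If `t` is an actual cause for `Q` in `D` (all tuples endogenous) with a
minimum-cardinality contingency set `Γ` (of size `m`), then `Γ ∪ {t}` is a
subset-minimal diagnosis containing `t` of cardinality `1 + m`, and every
subset-minimal diagnosis containing `t` has cardinality at least `1 + m`. -/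
theorem min_diagnosis_card_eq_one_plus_min_contingency
    {U : Type*} [DecidableEq U] (D : Finset U) (Q : Finset U → Prop)
    (hmono : ∀ S S' : Finset U, S ⊆ S' → Q S → Q S')
    (hempty : ¬ Q ∅)
    (t : U) (ht : t ∈ D)
    (Γ : Finset U) (hΓsub : Γ ⊆ D) (htΓ : t ∉ Γ)
    (hQ1 : Q (D \ Γ)) (hQ2 : ¬ Q (D \ insert t Γ))
    (hmin : ∀ Γ' ⊆ D, t ∉ Γ' → Q (D \ Γ') → ¬ Q (D \ insert t Γ') → Γ.card ≤ Γ'.card) :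
    IsMinDiagnosis D D Q (insert t Γ) ∧ (insert t Γ).card = 1 + Γ.card ∧
      ∀ Δ, IsMinDiagnosis D D Q Δ → t ∈ Δ → 1 + Γ.card ≤ Δ.card := by
  refine ⟨⟨⟨?_, hQ2⟩, ?_⟩, ?_, ?_⟩
  · exact Finset.insert_subset ht hΓsub
  · rintro Δ' hΔ' ⟨hΔ'D, hΔ'Q⟩
    by_cases htΔ' : t ∈ Δ'
    · -- Γ' := Δ'.erase t is a smaller contingency set
      have hsub : Δ'.erase t ⊆ Γ := by
        intro x hx
        have hxt := Finset.ne_of_mem_erase hx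
        have := hΔ'.1 (Finset.mem_of_mem_erase hx)
        rcases Finset.mem_insert.mp this with h | h
        · exact absurd h hxt
        · exact h
      have hne : Δ'.erase t ≠ Γ := by
        intro h
        have : Δ' = insert t Γ := by
          rw [← h, Finset.insert_erase htΔ']
        exact (Finset.ssubset_iff_subset_ne.mp hΔ').2 this
      have hlt : (Δ'.erase t).card < Γ.card :=
        Finset.card_lt_card (Finset.ssubset_iff_subset_ne.mpr ⟨hsub, hne⟩)
      have hQ' : Q (D \ Δ'.erase t) :=
        hmono _ _ (Finset.sdiff_subset_sdiff (le_refl D) hsub) hQ1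
      have hins : insert t (Δ'.erase t) = Δ' := Finset.insert_erase htΔ'
      have := hmin (Δ'.erase t) (fun x hx => hΔ'D (Finset.mem_of_mem_erase hx))
        (Finset.notMem_erase t Δ') hQ' (by rw [hins]; exact hΔ'Q)
      omega
    · -- Δ' ⊆ Γ, contradicting Q (D \ Γ)
      have hsub : Δ' ⊆ Γ := by
        intro x hx
        rcases Finset.mem_insert.mp (hΔ'.1 hx) with h | h
        · exact absurd (h ▸ hx) htΔ'
        · exact h
      exact hΔ'Q (hmono _ _ (Finset.sdiff_subset_sdiff (le_refl D) hsub) hQ1)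
  · rw [Finset.card_insert_of_notMem htΓ]; omega
  · rintro Δ ⟨⟨hΔD, hΔQ⟩, hΔmin⟩ htΔ
    have hQ' : Q (D \ Δ.erase t) := by
      by_contra hQn
      exact hΔmin (Δ.erase t) (Finset.erase_ssubset htΔ)
        ⟨fun x hx => hΔD (Finset.mem_of_mem_erase hx), hQn⟩
    have := hmin (Δ.erase t) (fun x hx => hΔD (Finset.mem_of_mem_erase hx))
      (Finset.notMem_erase t Δ) hQ'
      (by rw [Finset.insert_erase htΔ]; exact hΔQ)
    have hc : (Δ.erase t).card = Δ.card - 1 := Finset.card_erase_of_mem htΔ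
    have hpos : 0 < Δ.card := Finset.card_pos.mpr ⟨t, htΔ⟩
    omega
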